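/- Let l ≥ 3 be odd, let 𝔤 ≥ 1 and n_v ≥ 0, and assume 3 ∣ l whenever n_v > 0. Let G be the group with presentation ⟨y₁, …, y_{n_v}, z, d₁, …, d_{𝔤} | y_j³ = 1 (1 ≤ j ≤ n_v), z^l = 1, y₁⋯y_{n_v}·z·d₁²⋯d_{𝔤}² = 1⟩. Then the number of surjective group homomorphisms φ from G to the cyclic group Z/lZ such that φ(y_j) has order exactly 3 for every j and φ(z) has order exactly l, equals l^{𝔤−1} · φ_E(l) · 2^{n_v}, where φ_E is Euler's totient function. -/

import Mathlib

open Finset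

/-- Generators of the fundamental group of a closed non-orientable orbifold of
genus `gg` with signature `(gg; [3,…,3 (nv times), l])`: the branch-point generators
`y₁, …, y_{nv}` (`Sum.inl`), the generator `z` of the face branch point
(`Sum.inr (Sum.inl ())`), and the crosscap generators `d₁, …, d_{gg}`
(`Sum.inr (Sum.inr _)`). -/
abbrev OrbGen (nv gg : ℕ) := Sum (Fin nv) (Sum Unit (Fin gg))

/-- The relations `y_j³ = 1`, `z^l = 1`, `y₁ ⋯ y_{nv} · z · d₁² ⋯ d_{gg}² = 1`. -/
def orbRels (nv gg l : ℕ) : Set (FreeGroup (OrbGen nv gg)) :=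
  (Set.range fun j : Fin nv => (FreeGroup.of (Sum.inl j : OrbGen nv gg)) ^ 3) ∪
  {(FreeGroup.of (Sum.inr (Sum.inl ()) : OrbGen nv gg)) ^ l} ∪
  {(List.ofFn fun j : Fin nv => FreeGroup.of (Sum.inl j : OrbGen nv gg)).prod *
    FreeGroup.of (Sum.inr (Sum.inl ()) : OrbGen nv gg) *
    (List.ofFn fun i : Fin gg =>
      (FreeGroup.of (Sum.inr (Sum.inr i) : OrbGen nv gg)) ^ 2).prod}

/-- Homomorphisms out of a presented group correspond to relation-respecting maps
on generators. -/
noncomputable def presentedHomEquiv {α : Type*} {G : Type*} [Group G]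
    {rels : Set (FreeGroup α)} :
    (PresentedGroup rels →* G) ≃ {f : α → G // ∀ r ∈ rels, FreeGroup.lift f r = 1} where
  toFun φ := ⟨fun a => φ (PresentedGroup.of a), fun r hr => by
    have h1 : FreeGroup.lift (fun a => φ (PresentedGroup.of a)) r
        = (φ.comp (PresentedGroup.mk rels)) r :=
      (FreeGroup.lift_unique (φ.comp (PresentedGroup.mk rels)) (fun x => rfl)).symm
    have h2 : PresentedGroup.mk rels r = 1 :=
      (QuotientGroup.eq_one_iff r).2 (Subgroup.subset_normalClosure hr)
    simp only [h1, MonoidHom.comp_apply, h2, map_one]⟩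
  invFun f := PresentedGroup.toGroup f.2
  left_inv φ := by
    ext x
    simp [PresentedGroup.toGroup.of]
  right_inv f := by
    ext a
    simp [PresentedGroup.toGroup.of]

/-- The fiber of the total product map on `Fin (m+1) → M` over `c`. -/
def prodFiberEquiv {M : Type*} [CommGroup M] (m : ℕ) (c : M) :
    {d : Fin (m+1) → M // ∏ i, d i = c} ≃ (Fin m → M) where
  toFun d i := d.1 i.succ
  invFun t := ⟨Fin.cons (c * (∏ i, t i)⁻¹) t, by simp [Fin.prod_univ_succ]⟩
  left_inv d := by
    ext i
    refine Fin.cases ?_ (fun j => ?_) i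
    · have := d.2
      rw [Fin.prod_univ_succ] at this
      simp only [Fin.cons_zero]
      rw [mul_inv_eq_iff_eq_mul]
      exact this.symm
    · simp
  right_inv t := by ext i; simp

/-- The fiber of the "product of squares" map over `c`, for `M` of odd order. -/
noncomputable def sqProdFiberEquiv {M : Type*} [CommGroup M]
    (hcop : (Nat.card M).Coprime 2) (m : ℕ) (c : M) :
    {d : Fin (m+1) → M // ∏ i, (d i) ^ 2 = c} ≃ (Fin m → M) :=
  (Equiv.subtypeEquiv (Equiv.piCongrRight fun _ => powCoprime hcop)
    (by intro d; simp [powCoprime_apply])).trans (prodFiberEquiv m c)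

lemma orbRels_iff {nv gg l : ℕ} {M : Type*} [CommGroup M] (f : OrbGen nv gg → M) :
    (∀ r ∈ orbRels nv gg l, FreeGroup.lift f r = 1) ↔
      ((∀ j : Fin nv, f (Sum.inl j) ^ 3 = 1) ∧ f (Sum.inr (Sum.inl ())) ^ l = 1 ∧
      (∏ j : Fin nv, f (Sum.inl j)) * f (Sum.inr (Sum.inl ())) *
        ∏ i : Fin gg, f (Sum.inr (Sum.inr i)) ^ 2 = 1) := by
  have hbig : FreeGroup.lift f
      ((List.ofFn fun j : Fin nv => FreeGroup.of (Sum.inl j : OrbGen nv gg)).prod *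
        FreeGroup.of (Sum.inr (Sum.inl ()) : OrbGen nv gg) *
        (List.ofFn fun i : Fin gg =>
          (FreeGroup.of (Sum.inr (Sum.inr i) : OrbGen nv gg)) ^ 2).prod) =
      (∏ j : Fin nv, f (Sum.inl j)) * f (Sum.inr (Sum.inl ())) *
        ∏ i : Fin gg, f (Sum.inr (Sum.inr i)) ^ 2 := by
    simp [map_list_prod, List.map_ofFn, Function.comp_def, List.prod_ofFn]
  constructor
  · intro h
    refine ⟨fun j => ?_, ?_, ?_⟩
    · simpa using h _ (Or.inl (Or.inl ⟨j, rfl⟩))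
    · simpa using h _ (Or.inl (Or.inr rfl))
    · have := h _ (Or.inr rfl)
      rwa [hbig] at this
  · rintro ⟨h1, h2, h3⟩ r hr
    rcases hr with (⟨j, rfl⟩ | rfl) | rfl
    · simpa using h1 j
    · simpa using h2
    · rwa [hbig]

lemma surj_of_orderOf_eq_card {G M : Type*} [Group G] [Group M] [Finite M]
    (φ : G →* M) (x : G) (h : orderOf (φ x) = Nat.card M) : Function.Surjective φ := by
  rw [← MonoidHom.range_eq_top]
  have h1 : Subgroup.zpowers (φ x) ≤ φ.range := Subgroup.zpowers_le.2 ⟨x, rfl⟩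
  have h2 : Subgroup.zpowers (φ x) = ⊤ :=
    Subgroup.eq_top_of_card_eq _ (by rw [Nat.card_zpowers, h])
  exact top_le_iff.1 (h2 ▸ h1)

/-- Splitting the generator-indexed functions into the three blocks. -/
def tupleEquiv (nv gg : ℕ) (M : Type*) :
    (OrbGen nv gg → M) ≃ (Fin nv → M) × M × (Fin gg → M) :=
  (Equiv.sumArrowEquivProdArrow _ _ M).trans
    ((Equiv.refl _).prodCongr ((Equiv.sumArrowEquivProdArrow _ _ M).trans
      ((Equiv.funUnique Unit M).prodCongr (Equiv.refl _))))

/-- Repackaging the tuples as a sigma type over the `y`- and `z`-parts. -/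
def tupleSigmaEquiv (l nv gg : ℕ) (M : Type*) [CommGroup M] :
    {t : (Fin nv → M) × M × (Fin gg → M) //
        (∀ j, orderOf (t.1 j) = 3) ∧ orderOf t.2.1 = l ∧
        (∏ j, t.1 j) * t.2.1 * ∏ i, (t.2.2 i) ^ 2 = 1} ≃
    Σ _p : {y : Fin nv → M // ∀ j, orderOf (y j) = 3} × {z : M // orderOf z = l},
      {d : Fin gg → M //
        ∏ i, (d i) ^ 2 = ((∏ j, (_p.1 : Fin nv → M) j) * (_p.2 : M))⁻¹} where
  toFun t := ⟨(⟨t.1.1, t.2.1⟩, ⟨t.1.2.1, t.2.2.1⟩),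
    ⟨t.1.2.2, eq_inv_of_mul_eq_one_right t.2.2.2⟩⟩
  invFun p := ⟨(p.1.1.1, p.1.2.1, p.2.1),
    p.1.1.2, p.1.2.2, by rw [p.2.2, mul_inv_cancel]⟩
  left_inv t := rfl
  right_inv p := rfl

/-- for odd `l ≥ 3`, `gg ≥ 1`, `nv ≥ 0` with `3 ∣ l` whenever `nv > 0`,
the number of order-preserving epimorphisms from the fundamental group of the
non-orientable orbifold with signature `(gg; [3,…,3 (nv times), l])` onto `Z/lZ`
equals `l^(gg-1) · φ(l) · 2^nv`. -/
theorem count_order_preserving_epi_odd_period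
    (l gg nv : ℕ) (hl : 3 ≤ l) (hodd : Odd l) (hgg : 1 ≤ gg)
    (hdvd : 0 < nv → 3 ∣ l) :
    Nat.card {φ : PresentedGroup (orbRels nv gg l) →* Multiplicative (ZMod l) //
      Function.Surjective φ ∧
      (∀ j : Fin nv, orderOf (φ (PresentedGroup.of (Sum.inl j))) = 3) ∧
      orderOf (φ (PresentedGroup.of (Sum.inr (Sum.inl ())))) = l} =
    l ^ (gg - 1) * Nat.totient l * 2 ^ nv := by
  haveI : NeZero l := ⟨by omega⟩
  set M := Multiplicative (ZMod l) with hM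
  have hcardM : Nat.card M = l := by
    rw [Nat.card_eq_fintype_card, Fintype.card_multiplicative, ZMod.card]
  have hcop : (Nat.card M).Coprime 2 := by
    rw [hcardM]; exact hodd.coprime_two_right
  obtain ⟨m, rfl⟩ : ∃ m, gg = m + 1 := ⟨gg - 1, by omega⟩
  -- Step 1: homomorphisms ↔ tuples
  have e1 : {φ : PresentedGroup (orbRels nv (m+1) l) →* M //
      Function.Surjective φ ∧
      (∀ j : Fin nv, orderOf (φ (PresentedGroup.of (Sum.inl j))) = 3) ∧
      orderOf (φ (PresentedGroup.of (Sum.inr (Sum.inl ())))) = l} ≃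
      {g : {f : OrbGen nv (m+1) → M // ∀ r ∈ orbRels nv (m+1) l, FreeGroup.lift f r = 1} //
        (∀ j : Fin nv, orderOf (g.1 (Sum.inl j)) = 3) ∧
        orderOf (g.1 (Sum.inr (Sum.inl ()))) = l} := by
    refine Equiv.subtypeEquiv presentedHomEquiv (fun φ => ?_)
    constructor
    · rintro ⟨_, h2, h3⟩; exact ⟨h2, h3⟩
    · rintro ⟨h2, h3⟩
      exact ⟨surj_of_orderOf_eq_card φ _ (by rw [show orderOf (φ (PresentedGroup.of
        (Sum.inr (Sum.inl ())))) = l from h3, hcardM]), h2, h3⟩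
  have e2 : {g : {f : OrbGen nv (m+1) → M //
        ∀ r ∈ orbRels nv (m+1) l, FreeGroup.lift f r = 1} //
        (∀ j : Fin nv, orderOf (g.1 (Sum.inl j)) = 3) ∧
        orderOf (g.1 (Sum.inr (Sum.inl ()))) = l} ≃
      {f : OrbGen nv (m+1) → M //
        (∀ j : Fin nv, orderOf (f (Sum.inl j)) = 3) ∧
        orderOf (f (Sum.inr (Sum.inl ()))) = l ∧
        (∏ j : Fin nv, f (Sum.inl j)) * f (Sum.inr (Sum.inl ())) *
          ∏ i : Fin (m+1), f (Sum.inr (Sum.inr i)) ^ 2 = 1} := by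
    refine Equiv.trans (Equiv.subtypeSubtypeEquivSubtypeInter
      (fun f : OrbGen nv (m+1) → M => ∀ r ∈ orbRels nv (m+1) l, FreeGroup.lift f r = 1)
      (fun f => (∀ j : Fin nv, orderOf (f (Sum.inl j)) = 3) ∧
        orderOf (f (Sum.inr (Sum.inl ()))) = l))
      (Equiv.subtypeEquivRight (fun f => ?_))
    constructor
    · rintro ⟨hrels, h2, h3⟩
      exact ⟨h2, h3, ((orbRels_iff f).1 hrels).2.2⟩
    · rintro ⟨h2, h3, hbig⟩
      refine ⟨(orbRels_iff f).2 ⟨fun j => ?_, ?_, hbig⟩, h2, h3⟩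
      · rw [← h2 j]; exact pow_orderOf_eq_one _
      · have := pow_orderOf_eq_one (f (Sum.inr (Sum.inl ())))
        rwa [h3] at this
  have e3 : {f : OrbGen nv (m+1) → M //
        (∀ j : Fin nv, orderOf (f (Sum.inl j)) = 3) ∧
        orderOf (f (Sum.inr (Sum.inl ()))) = l ∧
        (∏ j : Fin nv, f (Sum.inl j)) * f (Sum.inr (Sum.inl ())) *
          ∏ i : Fin (m+1), f (Sum.inr (Sum.inr i)) ^ 2 = 1} ≃
      {t : (Fin nv → M) × M × (Fin (m+1) → M) //
        (∀ j, orderOf (t.1 j) = 3) ∧ orderOf t.2.1 = l ∧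
        (∏ j, t.1 j) * t.2.1 * ∏ i, (t.2.2 i) ^ 2 = 1} :=
    Equiv.subtypeEquiv (tupleEquiv nv (m+1) M) (fun f => Iff.rfl)
  have step1 : Nat.card {φ : PresentedGroup (orbRels nv (m+1) l) →* M //
      Function.Surjective φ ∧
      (∀ j : Fin nv, orderOf (φ (PresentedGroup.of (Sum.inl j))) = 3) ∧
      orderOf (φ (PresentedGroup.of (Sum.inr (Sum.inl ())))) = l} =
      Nat.card {t : (Fin nv → M) × M × (Fin (m+1) → M) //
        (∀ j, orderOf (t.1 j) = 3) ∧ orderOf t.2.1 = l ∧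
        (∏ j, t.1 j) * t.2.1 * ∏ i, (t.2.2 i) ^ 2 = 1} :=
    Nat.card_congr ((e1.trans e2).trans e3)
  rw [step1, Nat.card_congr (tupleSigmaEquiv l nv (m+1) M)]
  rw [Nat.card_congr ((Equiv.sigmaCongrRight
      (fun p => sqProdFiberEquiv hcop m _)).trans (Equiv.sigmaEquivProd _ _))]
  rw [Nat.card_prod, Nat.card_prod, Nat.card_pi]
  -- counting elements of given order in a cyclic group
  classical
  have horder : ∀ d : ℕ, d ∣ l → Nat.card {x : M // orderOf x = d} = Nat.totient d := by
    intro d hd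
    rw [Nat.card_eq_fintype_card, Fintype.card_subtype]
    exact IsCyclic.card_orderOf_eq_totient (by rwa [Fintype.card_multiplicative, ZMod.card])
  have hB : Nat.card {z : M // orderOf z = l} = Nat.totient l := horder l dvd_rfl
  have hA : Nat.card {y : Fin nv → M // ∀ j, orderOf (y j) = 3} = 2 ^ nv := by
    have epi : {y : Fin nv → M // ∀ j, orderOf (y j) = 3} ≃
        (Fin nv → {x : M // orderOf x = 3}) :=
      @Equiv.subtypePiEquivPi (Fin nv) (fun _ => M) (fun _ x => orderOf x = 3)
    rw [Nat.card_congr epi, Nat.card_pi]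
    rcases Nat.eq_zero_or_pos nv with h | h
    · subst h; simp
    · rw [horder 3 (hdvd h)]
      simp [Nat.totient_prime (by norm_num : Nat.Prime 3)]
  rw [hA, hB]
  simp only [hcardM, Finset.prod_const, Finset.card_univ, Fintype.card_fin,
    Nat.add_sub_cancel]
  ring
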